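/- Let (X, f) be a dynamical system, where X is a compact Hausdorff uniform space and f : X → X is a continuous surjection. If the set of minimal points of f is not dense in X, then f does not have topological (P(ℕ), F_ps)-shadowing, where P(ℕ) is the family of all subsets of ℕ and F_ps is the family of piecewise syndetic subsets of ℕ. -/

import Mathlib

open Filter Set Function

section Defs

variable {X : Type*} [UniformSpace X]

/-- A `D`-chain from `x` to `y`: a finite sequence `x = c 0, c 1, …, c n` (`n ≥ 1`)
with `c n = y` and `(f (c i), c (i+1)) ∈ D` for all `i < n`. -/
def DChain (f : X → X) (D : Set (X × X)) (x y : X) : Prop :=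
  ∃ n : ℕ, 1 ≤ n ∧ ∃ c : ℕ → X, c 0 = x ∧ c n = y ∧ ∀ i < n, (f (c i), c (i + 1)) ∈ D

/-- A `D`-chain from `x` to `y` contained in the set `S`. -/
def DChainIn (f : X → X) (D : Set (X × X)) (S : Set X) (x y : X) : Prop :=
  ∃ n : ℕ, 1 ≤ n ∧ ∃ c : ℕ → X, c 0 = x ∧ c n = y ∧ (∀ i ≤ n, c i ∈ S) ∧
    ∀ i < n, (f (c i), c (i + 1)) ∈ D

/-- The set of chain-recurrent points of `f`. -/
def CR (f : X → X) : Set X :=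
  {x | ∀ D ∈ uniformity X, DChain f D x x}

/-- The set of non-wandering points of `f`. -/
def NonWandering (f : X → X) : Set X :=
  {x | ∀ U : Set X, IsOpen U → x ∈ U → ∃ n : ℕ, 1 ≤ n ∧ (f^[n] '' U ∩ U).Nonempty}

/-- `(x i)` is a `D`-pseudo orbit on the set `A ⊆ ℕ`. -/
def PseudoOrbitOn (f : X → X) (D : Set (X × X)) (x : ℕ → X) (A : Set ℕ) : Prop :=
  ∀ i ∈ A, (f (x i), x (i + 1)) ∈ D

/-- `(x i)` is `E`-traced by `y` on the set `B ⊆ ℕ`. -/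
def TracedOn (f : X → X) (E : Set (X × X)) (x : ℕ → X) (y : X) (B : Set ℕ) : Prop :=
  ∀ i ∈ B, (f^[i] y, x i) ∈ E

/-- Topological shadowing. -/
def TopShadowing (f : X → X) : Prop :=
  ∀ E ∈ uniformity X, ∃ D ∈ uniformity X,
    ∀ x : ℕ → X, PseudoOrbitOn f D x Set.univ → ∃ y : X, TracedOn f E x y Set.univ

/-- Topological `(F, G)`-shadowing for families `F`, `G` of subsets of `ℕ`. -/
def FGShadowing (f : X → X) (F G : Set (Set ℕ)) : Prop :=
  ∀ E ∈ uniformity X, ∃ D ∈ uniformity X,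
    ∀ x : ℕ → X, (∃ A ∈ F, PseudoOrbitOn f D x A) →
      ∃ y : X, ∃ B ∈ G, TracedOn f E x y B

end Defs

/-- A set `A ⊆ ℕ` is syndetic: gaps are bounded. -/
def Syndetic (A : Set ℕ) : Prop :=
  ∃ M : ℕ, ∀ k : ℕ, ∃ j ∈ A, k ≤ j ∧ j ≤ k + M

/-- A set `A ⊆ ℕ` is thick: contains arbitrarily long blocks of consecutive numbers. -/
def Thick (A : Set ℕ) : Prop :=
  ∀ n : ℕ, ∃ k : ℕ, ∀ i < n, k + i ∈ A

/-- A set `A ⊆ ℕ` is thickly syndetic. -/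
def ThicklySyndetic (A : Set ℕ) : Prop :=
  ∀ n : ℕ, Syndetic {k : ℕ | ∀ i < n, k + i ∈ A}

/-- A set `A ⊆ ℕ` is piecewise syndetic. -/
def PiecewiseSyndetic (A : Set ℕ) : Prop :=
  ∃ T S : Set ℕ, Thick T ∧ Syndetic S ∧ A = T ∩ S

/-- The family of thick subsets of `ℕ`. -/
def thickFamily : Set (Set ℕ) := {A | Thick A}

/-- The family of piecewise syndetic subsets of `ℕ`. -/
def psFamily : Set (Set ℕ) := {A | PiecewiseSyndetic A}

open scoped Classical in
/-- The lower density of a subset of `ℕ`. -/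
noncomputable def lowerDensity (A : Set ℕ) : ℝ :=
  Filter.atTop.liminf fun n : ℕ => ((Finset.range n).filter (· ∈ A)).card / (n : ℝ)

/-- The family of subsets of `ℕ` of lower density `1`. -/
noncomputable def densityOneFamily : Set (Set ℕ) := {A | lowerDensity A = 1}

section Dyn

variable {X : Type*} [UniformSpace X]

/-- `x` is a minimal point of `f`. -/
def MinimalPt (f : X → X) (x : X) : Prop :=
  ∀ U : Set X, IsOpen U → x ∈ U → Syndetic {n : ℕ | f^[n] x ∈ U}

/-- `(x, y)` is a syndetically proximal pair for `f`. -/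
def SyndProx (f : X → X) (x y : X) : Prop :=
  ∀ E ∈ uniformity X, Syndetic {n : ℕ | (f^[n] x, f^[n] y) ∈ E}

end Dyn

section Aux2
variable {X : Type*} [UniformSpace X] [CompactSpace X]

lemma minimalPt_of_minimal (f : X → X) (hf : Continuous f) (M : Set X)
    (hcl : IsClosed M) (hinv : Set.MapsTo f M M)
    (hmin : ∀ Z, Z ⊆ M → Z.Nonempty → IsClosed Z → Set.MapsTo f Z Z → Z = M)
    {p : X} (hp : p ∈ M) : MinimalPt f p := by
  intro U hU hpU
  have hcov : ∀ q ∈ M, ∃ n : ℕ, f^[n] q ∈ U := by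
    intro q hq
    by_contra h
    push_neg at h
    set O : Set X := Set.range fun n : ℕ => f^[n] q with hO
    have hOM : O ⊆ M := by
      rintro _ ⟨n, rfl⟩
      exact Set.MapsTo.iterate hinv n hq
    have hclO : closure O ⊆ M := closure_minimal hOM hcl
    have hOinv : Set.MapsTo f (closure O) (closure O) := by
      intro x hx
      have h1 : f '' closure O ⊆ closure (f '' O) := image_closure_subset_closure_image hf
      have h2 : f '' O ⊆ O := by
        rintro _ ⟨_, ⟨n, rfl⟩, rfl⟩
        exact ⟨n + 1, Function.iterate_succ_apply' f n q⟩
      exact closure_mono h2 (h1 ⟨x, hx, rfl⟩)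
    have heq : closure O = M :=
      hmin _ hclO ⟨q, subset_closure ⟨0, rfl⟩⟩ isClosed_closure hOinv
    have hpO : p ∈ closure O := heq ▸ hp
    rcases mem_closure_iff.mp hpO U hU hpU with ⟨x, hxU, n, rfl⟩
    exact h n hxU
  have hMc : IsCompact M := hcl.isCompact
  have hcover : M ⊆ ⋃ n : ℕ, f^[n] ⁻¹' U := by
    intro q hq
    rcases hcov q hq with ⟨n, hn⟩
    exact Set.mem_iUnion.mpr ⟨n, hn⟩
  obtain ⟨t, ht⟩ := hMc.elim_finite_subcover (fun n : ℕ => f^[n] ⁻¹' U)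
    (fun n => hU.preimage (hf.iterate n)) hcover
  obtain ⟨N, hN⟩ : ∃ N, ∀ n ∈ t, n ≤ N := ⟨t.sup id, fun n hn => Finset.le_sup (f := id) hn⟩
  refine ⟨N, fun k => ?_⟩
  have hk : f^[k] p ∈ M := Set.MapsTo.iterate hinv k hp
  rcases Set.mem_iUnion₂.mp (ht hk) with ⟨n, hnt, hn⟩
  have hnN := hN n hnt
  refine ⟨n + k, ?_, Nat.le_add_left _ _, by omega⟩
  show f^[n + k] p ∈ U
  rw [Function.iterate_add_apply]
  exact hn

lemma exists_minimal_subset (f : X → X) (hf : Continuous f)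
    (Y : Set X) (hYne : Y.Nonempty) (hYcl : IsClosed Y) (hYinv : Set.MapsTo f Y Y) :
    ∃ M : Set X, M ⊆ Y ∧ M.Nonempty ∧ IsClosed M ∧ Set.MapsTo f M M ∧
      ∀ Z, Z ⊆ M → Z.Nonempty → IsClosed Z → Set.MapsTo f Z Z → Z = M := by
  set S : Set (Set X) := {Z | Z.Nonempty ∧ IsClosed Z ∧ Set.MapsTo f Z Z ∧ Z ⊆ Y} with hS
  have Hchain : ∀ c ⊆ S, IsChain (· ⊆ ·) c → c.Nonempty → ∃ lb ∈ S, ∀ s ∈ c, lb ⊆ s := by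
    intro c hcS hchain hcne
    refine ⟨⋂₀ c, ⟨?_, ?_, ?_, ?_⟩, fun s hs => Set.sInter_subset_of_mem hs⟩
    · have : Nonempty c := hcne.to_subtype
      refine IsCompact.nonempty_sInter_of_directed_nonempty_isCompact_isClosed ?_
        (fun U hU => (hcS hU).1) (fun U hU => (hcS hU).2.1.isCompact)
        (fun U hU => (hcS hU).2.1)
      intro a ha b hb
      rcases hchain.total ha hb with h | h
      · exact ⟨a, ha, Set.Subset.rfl, h⟩
      · exact ⟨b, hb, h, Set.Subset.rfl⟩
    · exact isClosed_sInter fun U hU => (hcS hU).2.1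
    · intro x hx
      exact fun U hU => (hcS hU).2.2.1 (hx U hU)
    · obtain ⟨s, hs⟩ := hcne
      exact (Set.sInter_subset_of_mem hs).trans (hcS hs).2.2.2
  obtain ⟨m, hmY, hmin⟩ := zorn_superset_nonempty S Hchain Y ⟨hYne, hYcl, hYinv, Set.Subset.rfl⟩
  obtain ⟨hmne, hmcl, hminv, hmsub⟩ := hmin.prop
  refine ⟨m, hmsub, hmne, hmcl, hminv, fun Z hZm hZne hZcl hZinv => ?_⟩
  exact Set.Subset.antisymm hZm (hmin.2 ⟨hZne, hZcl, hZinv, hZm.trans hmsub⟩ hZm)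

end Aux2

/-- if the minimal points of f are not dense, then f does not have
topological (P(ℕ), F_ps)-shadowing. -/
theorem not_fgShadowing_of_not_dense_minimal
    {X : Type*} [UniformSpace X] [CompactSpace X] [T2Space X]
    (f : X → X) (hf : Continuous f) (hsurj : Function.Surjective f)
    (hnd : ¬ Dense {x : X | MinimalPt f x}) :
    ¬ FGShadowing f (Set.univ : Set (Set ℕ)) psFamily := by
  intro hsh
  obtain ⟨z, hz⟩ : ∃ z, z ∉ closure {x : X | MinimalPt f x} := by
    by_contra h
    push_neg at h
    exact hnd fun x => h x
  have hVopen : IsOpen (closure {x : X | MinimalPt f x})ᶜ := isClosed_closure.isOpen_compl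
  obtain ⟨E₁, hE₁, hball⟩ := (isOpen_iff_ball_subset.mp hVopen) z hz
  have hE₁s : SetRel.symmetrize E₁ ∈ uniformity X := symmetrize_mem_uniformity hE₁
  obtain ⟨E, ⟨hE, hEcl⟩, hEsub⟩ := uniformity_hasBasis_closed.mem_iff.mp hE₁s
  set K : Set X := {w | (w, z) ∈ E} with hK
  have hKcl : IsClosed K := hEcl.preimage (Continuous.prodMk continuous_id continuous_const)
  have hKmin : ∀ w ∈ K, ¬ MinimalPt f w := by
    intro w hw hmw
    have h1 : (w, z) ∈ SetRel.symmetrize E₁ := hEsub hw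
    have h2 : w ∈ UniformSpace.ball z E₁ := h1.2
    exact hball h2 (subset_closure hmw)
  obtain ⟨D, hD, hprop⟩ := hsh E hE
  obtain ⟨y, B, hBps, htr⟩ := hprop (fun _ => z)
    ⟨∅, Set.mem_univ _, fun i hi => absurd hi (Set.notMem_empty i)⟩
  have htrK : ∀ i ∈ B, f^[i] y ∈ K := fun i hi => htr i hi
  obtain ⟨T, S, hT, ⟨M, hM⟩, hBeq⟩ := hBps
  -- the closed sets G m and F n
  set G : ℕ → Set X := fun m => ⋃ i ∈ Finset.Icc m (m + M), f^[i] ⁻¹' K with hG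
  have hGcl : ∀ m, IsClosed (G m) := fun m =>
    Set.Finite.isClosed_biUnion (Finset.Icc m (m + M)).finite_toSet
      fun i _ => hKcl.preimage (hf.iterate i)
  have hGmem : ∀ m (x : X), x ∈ G m ↔ ∃ i, m ≤ i ∧ i ≤ m + M ∧ f^[i] x ∈ K := by
    intro m x
    simp only [hG, Set.mem_iUnion, Finset.mem_coe, Finset.mem_Icc, Set.mem_preimage]
    constructor
    · rintro ⟨i, ⟨h1, h2⟩, h3⟩; exact ⟨i, h1, h2, h3⟩
    · rintro ⟨i, h1, h2, h3⟩; exact ⟨i, ⟨h1, h2⟩, h3⟩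
  set F : ℕ → Set X := fun n => ⋂ m ∈ Finset.range (n + 1), G m with hF
  have hFcl : ∀ n, IsClosed (F n) := fun n =>
    isClosed_biInter fun m _ => hGcl m
  have hFne : ∀ n, (F n).Nonempty := by
    intro n
    obtain ⟨k, hk⟩ := hT (n + 2 * M + 1)
    obtain ⟨j, hjS, hkj, hjk⟩ := hM k
    have hjT : j ∈ T := by
      have : j = k + (j - k) := by omega
      rw [this]
      exact hk _ (by omega)
    refine ⟨f^[j] y, Set.mem_iInter₂.mpr fun m hm => ?_⟩
    rw [Finset.mem_range] at hm
    obtain ⟨j', hj'S, hle, hle'⟩ := hM (j + m)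
    have hj'T : j' ∈ T := by
      have : j' = k + (j' - k) := by omega
      rw [this]
      exact hk _ (by omega)
    have hj'B : f^[j'] y ∈ K := htrK j' (hBeq ▸ ⟨hj'T, hj'S⟩)
    rw [hGmem]
    refine ⟨j' - j, by omega, by omega, ?_⟩
    have : (j' - j) + j = j' := by omega
    rw [← Function.iterate_add_apply, this]
    exact hj'B
  have hFdec : ∀ a b : ℕ, a ≤ b → F b ⊆ F a := by
    intro a b hab x hx
    refine Set.mem_iInter₂.mpr fun m hm => Set.mem_iInter₂.mp hx m ?_
    rw [Finset.mem_range] at hm ⊢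
    omega
  have hFint : (⋂ n, F n).Nonempty := by
    refine IsCompact.nonempty_iInter_of_directed_nonempty_isCompact_isClosed F
      (fun a b => ⟨max a b, hFdec a _ (le_max_left _ _), hFdec b _ (le_max_right _ _)⟩)
      hFne (fun n => (hFcl n).isCompact) hFcl
  obtain ⟨w, hw⟩ := hFint
  have hwG : ∀ m, w ∈ G m := by
    intro m
    have := Set.mem_iInter.mp hw m
    exact Set.mem_iInter₂.mp this m (Finset.mem_range.mpr (Nat.lt_succ_self m))
  -- the whole orbit of w lies in G 0
  have horb : ∀ n : ℕ, f^[n] w ∈ G 0 := by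
    intro n
    obtain ⟨i, h1, h2, h3⟩ := (hGmem n w).mp (hwG n)
    rw [hGmem]
    refine ⟨i - n, by omega, by omega, ?_⟩
    have : (i - n) + n = i := by omega
    rw [← Function.iterate_add_apply, this]
    exact h3
  set Y : Set X := closure (Set.range fun n : ℕ => f^[n] w) with hY
  have hYclo : IsClosed Y := isClosed_closure
  have hYne : Y.Nonempty := ⟨w, subset_closure ⟨0, rfl⟩⟩
  have hYinv : Set.MapsTo f Y Y := by
    intro x hx
    have h1 : f '' Y ⊆ closure (f '' Set.range fun n : ℕ => f^[n] w) :=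
      image_closure_subset_closure_image hf
    have h2 : (f '' Set.range fun n : ℕ => f^[n] w) ⊆ Set.range fun n : ℕ => f^[n] w := by
      rintro _ ⟨_, ⟨n, rfl⟩, rfl⟩
      exact ⟨n + 1, Function.iterate_succ_apply' f n w⟩
    exact closure_mono h2 (h1 ⟨x, hx, rfl⟩)
  have hYG : Y ⊆ G 0 := by
    apply closure_minimal _ (hGcl 0)
    rintro _ ⟨n, rfl⟩
    exact horb n
  obtain ⟨Mn, hMnY, hMne, hMcl, hMinv, hMmin⟩ := exists_minimal_subset f hf Y hYne hYclo hYinv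
  obtain ⟨p, hp⟩ := hMne
  obtain ⟨i, _, _, hiK⟩ := (hGmem 0 p).mp (hYG (hMnY hp))
  have hq : f^[i] p ∈ Mn := Set.MapsTo.iterate hMinv i hp
  exact hKmin _ hiK (minimalPt_of_minimal f hf Mn hMcl hMinv hMmin hq)
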